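/- For every integer k ≥ 2, every k-tree process realization (G_n)_{n ≥ k+1}, every n ≥ k+1 and every vertex v of G_n with deg_{G_n}(v) = d, the proportion of k-cliques of G_n that contain v (i.e., the number of k-cliques containing v divided by the total number of k-cliques of G_n) equals ((k − 1)·d − k·(k − 2)) / (k·n − k² + 1). Consequently, in the random k-tree process, conditionally on G^k(n), the probability that the new vertex v_{n+1} is joined to a given vertex v of degree d is ((k − 1)·d − k·(k − 2)) / (k·n − k² + 1). -/

import Mathlib

open MeasureTheory

/-- A `k`-tree process realization: `G (k+1)` is the complete graph on the vertices
`0, …, k` (representing `v₁, …, v_{k+1}`), and for each `n ≥ k+1`, the graph `G (n+1)`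
is obtained from `G n` by adding the new vertex `n` (representing `v_{n+1}`) and joining
it to all `k` vertices of some `k`-clique of `G n`. -/
def IsKTreeRealization (k : ℕ) (G : ℕ → SimpleGraph ℕ) : Prop :=
  (∀ u v, (G (k + 1)).Adj u v ↔ u ≠ v ∧ u < k + 1 ∧ v < k + 1) ∧
  ∀ n, k + 1 ≤ n → ∃ C : Finset ℕ, (G n).IsNClique k C ∧ (∀ u ∈ C, u < n) ∧
    ∀ u v, (G (n + 1)).Adj u v ↔ (G n).Adj u v ∨ (u = n ∧ v ∈ C) ∨ (v = n ∧ u ∈ C)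

/-- The complete graph on the vertices `0, …, m-1` inside `ℕ`. -/
def completeBelow (m : ℕ) : SimpleGraph ℕ :=
  SimpleGraph.fromRel (fun u v => u < m ∧ v < m)

/-- The graph obtained from `g` by joining the new vertex `n` to all vertices of `C`. -/
def extendGraph (g : SimpleGraph ℕ) (n : ℕ) (C : Finset ℕ) : SimpleGraph ℕ :=
  SimpleGraph.fromRel (fun u v => g.Adj u v ∨ (u = n ∧ v ∈ C))

/-- The random `k`-tree process: `G (k+1)` is almost surely the complete graph on the
vertices `0, …, k`, and given `G n = g` (for `n ≥ k+1`), a `k`-clique of `g` is chosen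
uniformly at random among all `k`-cliques of `g` and the new vertex `n` is joined to all
of its `k` vertices. -/
structure IsRandomKTreeProcess (k : ℕ) {Ω : Type*} [MeasurableSpace Ω]
    (μ : Measure Ω) (G : ℕ → Ω → SimpleGraph ℕ) : Prop where
  meas : ∀ n (g : SimpleGraph ℕ), MeasurableSet {ω | G n ω = g}
  init : μ {ω | G (k + 1) ω = completeBelow (k + 1)} = 1
  step : ∀ n, k + 1 ≤ n → ∀ g : SimpleGraph ℕ, ∀ C : Finset ℕ, g.IsNClique k C →
    μ {ω | G n ω = g ∧ G (n + 1) ω = extendGraph g n C}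
      = μ {ω | G n ω = g} / ({D : Finset ℕ | g.IsNClique k D}.ncard : ENNReal)

lemma completeBelow_adj {m u v : ℕ} :
    (completeBelow m).Adj u v ↔ u ≠ v ∧ u < m ∧ v < m := by
  simp [completeBelow, SimpleGraph.fromRel_adj]; tauto

lemma extendGraph_adj {g : SimpleGraph ℕ} {n : ℕ} {C : Finset ℕ} {u v : ℕ} :
    (extendGraph g n C).Adj u v ↔
      u ≠ v ∧ (g.Adj u v ∨ (u = n ∧ v ∈ C) ∨ (v = n ∧ u ∈ C)) := by
  constructor
  · rintro ⟨h1, h2 | h2⟩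
    · exact ⟨h1, by tauto⟩
    · rcases h2 with h2 | h2
      · exact ⟨h1, Or.inl h2.symm⟩
      · exact ⟨h1, by tauto⟩
  · rintro ⟨h1, h2⟩
    refine ⟨h1, ?_⟩
    rcases h2 with h | h | h
    · exact Or.inl (Or.inl h)
    · exact Or.inl (Or.inr h)
    · exact Or.inr (Or.inr h)

lemma extendGraph_adj' {g : SimpleGraph ℕ} {n : ℕ} {C : Finset ℕ}
    (hg : ∀ u v, g.Adj u v → u < n ∧ v < n) (hC : ∀ u ∈ C, u < n) {u v : ℕ} :
    (extendGraph g n C).Adj u v ↔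
      g.Adj u v ∨ (u = n ∧ v ∈ C) ∨ (v = n ∧ u ∈ C) := by
  rw [extendGraph_adj]
  constructor
  · exact fun h => h.2
  · intro h
    refine ⟨?_, h⟩
    rcases h with h | ⟨rfl, hv⟩ | ⟨rfl, hu⟩
    · exact h.ne
    · exact fun e => absurd (hC v hv) (by omega)
    · exact fun e => absurd (hC u hu) (by omega)

/-- The set of graphs reachable by the k-tree process at time n. -/
inductive Reach (k : ℕ) : ℕ → SimpleGraph ℕ → Prop
  | base : Reach k (k + 1) (completeBelow (k + 1))
  | step : ∀ n g C, k + 1 ≤ n → Reach k n g → g.IsNClique k C →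
      Reach k (n + 1) (extendGraph g n C)

lemma reach_succ_inv {k n : ℕ} {g' : SimpleGraph ℕ} (hn : k + 1 ≤ n)
    (h : Reach k (n + 1) g') :
    ∃ g C, Reach k n g ∧ g.IsNClique k C ∧ g' = extendGraph g n C := by
  generalize hN : n + 1 = N at h
  induction h with
  | base => omega
  | step m g C hm hr hC ih =>
      have : m = n := by omega
      subst this
      exact ⟨g, C, hr, hC, rfl⟩

open Finset in
lemma count_subsets_containing {A : Finset ℕ} {m v : ℕ} (hv : v ∈ A)
    (hA : A.card = m + 1) :
    ((A.powersetCard m).filter (fun S => v ∈ S)).card = m := by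
  classical
  have htot : (A.powersetCard m).card = m + 1 := by
    rw [Finset.card_powersetCard, hA, Nat.choose_succ_self_right]
  have hsplit := Finset.card_filter_add_card_filter_not
    (s := A.powersetCard m) (p := fun S => v ∈ S)
  have hnot : ((A.powersetCard m).filter (fun S => ¬ v ∈ S)) = {A.erase v} := by
    ext S
    simp only [Finset.mem_filter, Finset.mem_powersetCard, Finset.mem_singleton]
    constructor
    · rintro ⟨⟨hS, hcard⟩, hvS⟩
      apply Finset.eq_of_subset_of_card_le
      · intro x hx
        exact Finset.mem_erase.2 ⟨fun e => hvS (e ▸ hx), hS hx⟩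
      · rw [Finset.card_erase_of_mem hv, hA, hcard]; omega
    · rintro rfl
      exact ⟨⟨Finset.erase_subset _ _, by rw [Finset.card_erase_of_mem hv, hA]; omega⟩,
        Finset.notMem_erase _ _⟩
  rw [hnot] at hsplit
  simp only [Finset.card_singleton] at hsplit
  omega

lemma clique_mem_lt {k n : ℕ} {g : SimpleGraph ℕ} (hk : 2 ≤ k)
    (ha : ∀ u v, g.Adj u v → u < n ∧ v < n) {C : Finset ℕ}
    (hC : g.IsNClique k C) : ∀ u ∈ C, u < n := by
  intro u hu
  have h1 : 1 < C.card := by rw [hC.2]; omega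
  obtain ⟨w, hw, hwu⟩ := Finset.exists_mem_ne h1 u
  exact (ha u w (hC.1 hu hw (Ne.symm hwu))).1

lemma clique_base_iff {k : ℕ} (hk : 2 ≤ k) {C : Finset ℕ} :
    (completeBelow (k + 1)).IsNClique k C ↔
      C ⊆ Finset.range (k + 1) ∧ C.card = k := by
  constructor
  · intro hC
    refine ⟨?_, hC.2⟩
    intro u hu
    have h1 : 1 < C.card := by rw [hC.2]; omega
    obtain ⟨w, hw, hwu⟩ := Finset.exists_mem_ne h1 u
    have := hC.1 hu hw (Ne.symm hwu)
    rw [completeBelow_adj] at this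
    exact Finset.mem_range.2 this.2.1
  · rintro ⟨hsub, hcard⟩
    refine ⟨?_, hcard⟩
    intro u hu v hv huv
    exact completeBelow_adj.2 ⟨huv,
      Finset.mem_range.1 (hsub hu), Finset.mem_range.1 (hsub hv)⟩

lemma cliques_base_eq {k : ℕ} (hk : 2 ≤ k) :
    {C : Finset ℕ | (completeBelow (k + 1)).IsNClique k C} =
      ↑((Finset.range (k + 1)).powersetCard k) := by
  ext C
  simp [clique_base_iff hk, Finset.mem_powersetCard]

lemma nbhd_base {k v : ℕ} (hv : v < k + 1) :
    (completeBelow (k + 1)).neighborSet v = ↑((Finset.range (k + 1)).erase v) := by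
  ext u
  simp only [SimpleGraph.mem_neighborSet, completeBelow_adj, Finset.coe_erase,
    Set.mem_diff, Finset.coe_range, Set.mem_Iio, Set.mem_singleton_iff]
  constructor
  · rintro ⟨h1, h2, h3⟩; exact ⟨h3, Ne.symm h1⟩
  · rintro ⟨h1, h2⟩; exact ⟨fun e => h2 e.symm, hv, h1⟩

section Extend
variable {k n : ℕ} {g : SimpleGraph ℕ} {C : Finset ℕ}

lemma cliques_extend_eq (hk : 2 ≤ k) (ha : ∀ u v, g.Adj u v → u < n ∧ v < n)
    (hC : g.IsNClique k C) (hCn : ∀ u ∈ C, u < n) :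
    {D : Finset ℕ | (extendGraph g n C).IsNClique k D} =
      {D : Finset ℕ | g.IsNClique k D} ∪
        ↑((C.powersetCard (k - 1)).image (insert n)) := by
  classical
  have hnC : n ∉ C := fun h => absurd (hCn n h) (lt_irrefl n)
  have adj' : ∀ u v : ℕ, (extendGraph g n C).Adj u v ↔
      g.Adj u v ∨ (u = n ∧ v ∈ C) ∨ (v = n ∧ u ∈ C) :=
    fun u v => extendGraph_adj' ha hCn
  ext D
  simp only [Set.mem_setOf_eq, Set.mem_union, Finset.coe_image, Set.mem_image,
    Finset.mem_coe, Finset.mem_powersetCard]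
  constructor
  · intro hD
    by_cases hn : n ∈ D
    · right
      refine ⟨D.erase n, ⟨?_, ?_⟩, Finset.insert_erase hn⟩
      · intro u hu
        have hun : u ≠ n := Finset.ne_of_mem_erase hu
        have huD : u ∈ D := Finset.mem_of_mem_erase hu
        have hadj := hD.1 hn huD (Ne.symm hun)
        rw [adj'] at hadj
        rcases hadj with h | ⟨_, h⟩ | ⟨h, _⟩
        · exact absurd (ha n u h).1 (lt_irrefl n)
        · exact h
        · exact absurd h hun
      · rw [Finset.card_erase_of_mem hn, hD.2]
    · left
      refine ⟨?_, hD.2⟩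
      intro u hu v hv huv
      have hadj := hD.1 hu hv huv
      rw [adj'] at hadj
      rcases hadj with h | ⟨h, _⟩ | ⟨h, _⟩
      · exact h
      · exact absurd (h ▸ hu) hn
      · exact absurd (h ▸ hv) hn
  · rintro (hD | ⟨S, ⟨hS, hScard⟩, rfl⟩)
    · refine ⟨?_, hD.2⟩
      intro u hu v hv huv
      rw [adj']
      exact Or.inl (hD.1 hu hv huv)
    · have hnS : n ∉ S := fun h => hnC (hS h)
      constructor
      · intro u hu v hv huv
        rw [adj']
        simp only [Finset.coe_insert, Set.mem_insert_iff, Finset.mem_coe] at hu hv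
        rcases hu with rfl | hu
        · rcases hv with rfl | hv
          · exact absurd rfl huv
          · exact Or.inr (Or.inl ⟨rfl, hS hv⟩)
        · rcases hv with rfl | hv
          · exact Or.inr (Or.inr ⟨rfl, hS hu⟩)
          · exact Or.inl (hC.1 (hS hu) (hS hv) huv)
      · rw [Finset.card_insert_of_notMem hnS, hScard]; omega

lemma nbhd_extend_self (ha : ∀ u v, g.Adj u v → u < n ∧ v < n)
    (hCn : ∀ u ∈ C, u < n) :
    (extendGraph g n C).neighborSet n = ↑C := by
  have hnC : n ∉ C := fun h => absurd (hCn n h) (lt_irrefl n)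
  ext u
  rw [SimpleGraph.mem_neighborSet, extendGraph_adj' ha hCn]
  constructor
  · rintro (h | ⟨_, h⟩ | ⟨rfl, h⟩)
    · exact absurd (ha n u h).1 (lt_irrefl n)
    · exact h
    · exact absurd h hnC
  · exact fun h => Or.inr (Or.inl ⟨rfl, h⟩)

lemma nbhd_extend_mem (ha : ∀ u v, g.Adj u v → u < n ∧ v < n)
    (hCn : ∀ u ∈ C, u < n) {v : ℕ} (hv : v < n) (hvC : v ∈ C) :
    (extendGraph g n C).neighborSet v = insert n (g.neighborSet v) := by
  ext u
  rw [SimpleGraph.mem_neighborSet, extendGraph_adj' ha hCn]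
  simp only [Set.mem_insert_iff, SimpleGraph.mem_neighborSet]
  constructor
  · rintro (h | ⟨h, _⟩ | ⟨rfl, _⟩)
    · exact Or.inr h
    · omega
    · exact Or.inl rfl
  · rintro (rfl | h)
    · exact Or.inr (Or.inr ⟨rfl, hvC⟩)
    · exact Or.inl h

lemma nbhd_extend_not_mem (ha : ∀ u v, g.Adj u v → u < n ∧ v < n)
    (hCn : ∀ u ∈ C, u < n) {v : ℕ} (hv : v < n) (hvC : v ∉ C) :
    (extendGraph g n C).neighborSet v = g.neighborSet v := by
  ext u
  rw [SimpleGraph.mem_neighborSet, extendGraph_adj' ha hCn]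
  simp only [SimpleGraph.mem_neighborSet]
  constructor
  · rintro (h | ⟨h, _⟩ | ⟨rfl, h⟩)
    · exact h
    · omega
    · exact absurd h hvC
  · exact fun h => Or.inl h

end Extend

/-- The counting invariant maintained along the k-tree process. -/
def KTInv (k n : ℕ) (g : SimpleGraph ℕ) : Prop :=
  (∀ u v, g.Adj u v → u < n ∧ v < n) ∧
  {C : Finset ℕ | g.IsNClique k C}.Finite ∧
  {C : Finset ℕ | g.IsNClique k C}.ncard = k * n - k ^ 2 + 1 ∧
  (∀ v, v < n → (g.neighborSet v).Finite ∧ k ≤ (g.neighborSet v).ncard ∧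
    {C : Finset ℕ | g.IsNClique k C ∧ v ∈ C}.ncard
      = (k - 1) * ((g.neighborSet v).ncard - k) + k)

lemma ktinv_base {k : ℕ} (hk : 2 ≤ k) : KTInv k (k + 1) (completeBelow (k + 1)) := by
  classical
  have hcl := cliques_base_eq hk
  refine ⟨?_, ?_, ?_, ?_⟩
  · intro u v h
    rw [completeBelow_adj] at h
    exact ⟨h.2.1, h.2.2⟩
  · rw [hcl]; exact (Finset.range (k + 1)).powersetCard k |>.finite_toSet
  · rw [hcl, Set.ncard_coe_finset, Finset.card_powersetCard, Finset.card_range,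
      Nat.choose_succ_self_right]
    have h1 : k * (k + 1) = k ^ 2 + k := by ring
    omega
  · intro v hv
    have hnb := nbhd_base hv
    have hdeg : ((completeBelow (k + 1)).neighborSet v).ncard = k := by
      rw [hnb, Set.ncard_coe_finset, Finset.card_erase_of_mem
        (Finset.mem_range.2 hv), Finset.card_range]
      omega
    refine ⟨by rw [hnb]; exact Finset.finite_toSet _, hdeg.ge, ?_⟩
    rw [hdeg]
    have hset : {C : Finset ℕ | (completeBelow (k + 1)).IsNClique k C ∧ v ∈ C} =
        ↑(((Finset.range (k + 1)).powersetCard k).filter (fun S => v ∈ S)) := by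
      ext D
      simp only [Set.mem_setOf_eq, Finset.coe_filter, clique_base_iff hk,
        Finset.mem_powersetCard]
      try tauto
    rw [hset, Set.ncard_coe_finset, count_subsets_containing
      (Finset.mem_range.2 hv) (by rw [Finset.card_range])]
    simp

lemma ktinv_step {k n : ℕ} (hk : 2 ≤ k) (hn : k + 1 ≤ n) {g : SimpleGraph ℕ}
    {C : Finset ℕ} (hC : g.IsNClique k C) (hI : KTInv k n g) :
    KTInv k (n + 1) (extendGraph g n C) := by
  classical
  obtain ⟨ha, hfin, htot, hvert⟩ := hI
  have hCn : ∀ u ∈ C, u < n := clique_mem_lt hk ha hC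
  have hnC : n ∉ C := fun h => absurd (hCn n h) (lt_irrefl n)
  have hdecomp := cliques_extend_eq hk ha hC hCn
  set Snew : Finset (Finset ℕ) := (C.powersetCard (k - 1)).image (insert n)
    with hSnew
  have hinj : Set.InjOn (insert n) (↑(Finset.powersetCard (k - 1) C) : Set (Finset ℕ)) := by
    intro S hS S' hS' h
    simp only [Finset.mem_coe, Finset.mem_powersetCard] at hS hS'
    have hnS : n ∉ S := fun hm => hnC (hS.1 hm)
    have hnS' : n ∉ S' := fun hm => hnC (hS'.1 hm)
    rw [← Finset.erase_insert hnS, ← Finset.erase_insert hnS', h]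
  have hSnew_card : Snew.card = k := by
    have h1 : k.choose (k - 1) = k.choose 1 := by
      rw [← Nat.choose_symm (Nat.sub_le k 1)]
      congr 1
      omega
    rw [hSnew, Finset.card_image_of_injOn hinj, Finset.card_powersetCard,
      hC.2, h1, Nat.choose_one_right]
  have hSfin : (↑Snew : Set (Finset ℕ)).Finite := Snew.finite_toSet
  have hdisj : Disjoint {D : Finset ℕ | g.IsNClique k D} (↑Snew : Set (Finset ℕ)) := by
    rw [Set.disjoint_left]
    intro D hD hD'
    simp only [hSnew, Finset.coe_image, Set.mem_image, Finset.mem_coe] at hD'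
    obtain ⟨S, _, rfl⟩ := hD'
    have := clique_mem_lt hk ha hD n (Finset.mem_insert_self n S)
    omega
  have hmemdecomp := Set.ext_iff.1 hdecomp
  refine ⟨?_, ?_, ?_, ?_⟩
  · intro u v h
    rw [extendGraph_adj' ha hCn] at h
    rcases h with h | ⟨rfl, h⟩ | ⟨rfl, h⟩
    · have := ha u v h; omega
    · have := hCn v h; omega
    · have := hCn u h; omega
  · rw [hdecomp]; exact hfin.union hSfin
  · rw [hdecomp, Set.ncard_union_eq hdisj hfin hSfin, htot,
      Set.ncard_coe_finset, hSnew_card]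
    have hka : k * k ≤ k * n := Nat.mul_le_mul_left k (by omega)
    have h2 : k * (n + 1) = k * n + k := by ring
    have h3 : k ^ 2 = k * k := by ring
    omega
  · intro v hv
    by_cases hvn : v = n
    · rw [hvn, nbhd_extend_self ha hCn, Set.ncard_coe_finset, hC.2]
      refine ⟨C.finite_toSet, le_refl k, ?_⟩
      have hset : {D : Finset ℕ | (extendGraph g n C).IsNClique k D ∧ n ∈ D}
          = ↑Snew := by
        ext D
        simp only [Set.mem_setOf_eq, Finset.mem_coe]
        constructor
        · rintro ⟨hD, hvD⟩
          rcases (hmemdecomp D).1 hD with h | h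
          · exact absurd (clique_mem_lt hk ha h n hvD) (lt_irrefl n)
          · exact h
        · intro hD
          refine ⟨(hmemdecomp D).2 (Or.inr hD), ?_⟩
          simp only [hSnew, Finset.mem_image] at hD
          obtain ⟨S, _, rfl⟩ := hD
          exact Finset.mem_insert_self n S
      rw [hset, Set.ncard_coe_finset, hSnew_card]
      simp
    · have hvn' : v < n := by omega
      obtain ⟨hnf, hdge, hcnt⟩ := hvert v hvn'
      by_cases hvC : v ∈ C
      · rw [nbhd_extend_mem ha hCn hvn' hvC]
        have hnmem : n ∉ g.neighborSet v := fun h => absurd (ha v n h).2 (lt_irrefl n)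
        have hncard : (insert n (g.neighborSet v)).ncard
            = (g.neighborSet v).ncard + 1 := Set.ncard_insert_of_notMem hnmem hnf
        rw [hncard]
        refine ⟨hnf.insert n, by omega, ?_⟩
        have hset : {D : Finset ℕ | (extendGraph g n C).IsNClique k D ∧ v ∈ D} =
            {D : Finset ℕ | g.IsNClique k D ∧ v ∈ D} ∪
              ↑(Snew.filter (fun S => v ∈ S)) := by
          ext D
          simp only [Set.mem_setOf_eq, Set.mem_union, Finset.coe_filter,
            Finset.mem_coe]
          constructor
          · rintro ⟨hD, hvD⟩
            rcases (hmemdecomp D).1 hD with h | h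
            · exact Or.inl ⟨h, hvD⟩
            · exact Or.inr ⟨h, hvD⟩
          · rintro (⟨h, hvD⟩ | ⟨h, hvD⟩)
            · exact ⟨(hmemdecomp D).2 (Or.inl h), hvD⟩
            · exact ⟨(hmemdecomp D).2 (Or.inr h), hvD⟩
        have hdisj2 : Disjoint {D : Finset ℕ | g.IsNClique k D ∧ v ∈ D}
            (↑(Snew.filter (fun S => v ∈ S)) : Set (Finset ℕ)) :=
          hdisj.mono (fun D hD => hD.1)
            (Finset.coe_subset.2 (Finset.filter_subset _ _))
        have hfin2 : {D : Finset ℕ | g.IsNClique k D ∧ v ∈ D}.Finite :=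
          hfin.subset (fun D hD => hD.1)
        have hfiltercard : (Snew.filter (fun S => v ∈ S)).card = k - 1 := by
          rw [hSnew, Finset.filter_image]
          have hcong : (C.powersetCard (k - 1)).filter (fun S => v ∈ insert n S)
              = (C.powersetCard (k - 1)).filter (fun S => v ∈ S) := by
            apply Finset.filter_congr
            intro S _
            simp only [Finset.mem_insert]
            constructor
            · rintro (rfl | h)
              · omega
              · exact h
            · exact fun h => Or.inr h
          rw [hcong, Finset.card_image_of_injOn
            (hinj.mono (Finset.coe_subset.2 (Finset.filter_subset _ _))),
            count_subsets_containing hvC (by rw [hC.2]; omega)]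
        rw [hset, Set.ncard_union_eq hdisj2 hfin2 (Finset.finite_toSet _), hcnt,
          Set.ncard_coe_finset, hfiltercard]
        have h4 : (k - 1) * ((g.neighborSet v).ncard - k + 1)
            = (k - 1) * ((g.neighborSet v).ncard - k) + (k - 1) := by ring
        have h5 : (g.neighborSet v).ncard + 1 - k
            = ((g.neighborSet v).ncard - k) + 1 := by omega
        rw [h5]
        omega
      · rw [nbhd_extend_not_mem ha hCn hvn' hvC]
        refine ⟨hnf, hdge, ?_⟩
        have hset : {D : Finset ℕ | (extendGraph g n C).IsNClique k D ∧ v ∈ D}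
            = {D : Finset ℕ | g.IsNClique k D ∧ v ∈ D} := by
          ext D
          simp only [Set.mem_setOf_eq]
          constructor
          · rintro ⟨hD, hvD⟩
            rcases (hmemdecomp D).1 hD with h | h
            · exact ⟨h, hvD⟩
            · exfalso
              simp only [hSnew, Finset.mem_coe, Finset.mem_image] at h
              obtain ⟨S, hS, rfl⟩ := h
              rcases Finset.mem_insert.1 hvD with rfl | hvS
              · omega
              · exact hvC ((Finset.mem_powersetCard.1 hS).1 hvS)
          · rintro ⟨h, hvD⟩
            exact ⟨(hmemdecomp D).2 (Or.inl h), hvD⟩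
        rw [hset, hcnt]

lemma reach_ge {k n : ℕ} {g : SimpleGraph ℕ} (h : Reach k n g) : k + 1 ≤ n := by
  induction h <;> omega

lemma reach_inv {k n : ℕ} {g : SimpleGraph ℕ} (hk : 2 ≤ k) (h : Reach k n g) :
    KTInv k n g := by
  induction h with
  | base => exact ktinv_base hk
  | step n g C hn hr hC ih => exact ktinv_step hk hn hC ih

lemma realization_reach {k : ℕ} (hk : 2 ≤ k) {G : ℕ → SimpleGraph ℕ}
    (hG : IsKTreeRealization k G) : ∀ n, k + 1 ≤ n → Reach k n (G n) := by
  intro n hn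
  induction n, hn using Nat.le_induction with
  | base =>
      have h : G (k + 1) = completeBelow (k + 1) := by
        ext u v
        rw [hG.1, completeBelow_adj]
      rw [h]
      exact Reach.base
  | succ n hn ih =>
      obtain ⟨C, hC, hCn, hadj⟩ := hG.2 n hn
      have ha := (reach_inv hk ih).1
      have h : G (n + 1) = extendGraph (G n) n C := by
        ext u v
        rw [hadj, extendGraph_adj' ha hCn]
      rw [h]
      exact Reach.step n (G n) C hn ih hC

lemma cast_N {k n : ℕ} (hk : 2 ≤ k) (hn : k + 1 ≤ n) :
    ((k * n - k ^ 2 + 1 : ℕ) : ℝ) = (k : ℝ) * n - (k : ℝ) ^ 2 + 1 := by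
  have hka : k ^ 2 ≤ k * n := by
    have h1 : k * k ≤ k * n := Nat.mul_le_mul_left k (by omega)
    have h2 : k ^ 2 = k * k := by ring
    omega
  push_cast [Nat.cast_sub hka]
  ring

lemma cast_M {k d : ℕ} (hk : 2 ≤ k) (hd : k ≤ d) :
    (((k - 1) * (d - k) + k : ℕ) : ℝ) = ((k : ℝ) - 1) * d - k * (k - 2) := by
  push_cast [Nat.cast_sub hd, Nat.cast_sub (show 1 ≤ k by omega),
    Nat.cast_sub (show 2 ≤ k from hk)]
  ring

lemma ratio_eq {k n : ℕ} {g : SimpleGraph ℕ} (hk : 2 ≤ k) (hn : k + 1 ≤ n)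
    (hI : KTInv k n g) {v : ℕ} (hv : v < n) {d : ℕ}
    (hd : (g.neighborSet v).ncard = d) :
    ({C : Finset ℕ | g.IsNClique k C ∧ v ∈ C}.ncard : ℝ)
        / ({C : Finset ℕ | g.IsNClique k C}.ncard : ℝ)
      = (((k : ℝ) - 1) * d - k * (k - 2)) / ((k : ℝ) * n - (k : ℝ) ^ 2 + 1) := by
  obtain ⟨ha, hfin, htot, hvert⟩ := hI
  obtain ⟨hnf, hdge, hcnt⟩ := hvert v hv
  rw [hd] at hdge hcnt
  rw [hcnt, htot, cast_M hk hdge, cast_N hk hn]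

lemma reach_base_eq {k : ℕ} {g : SimpleGraph ℕ} (h : Reach k (k + 1) g) :
    g = completeBelow (k + 1) := by
  generalize hN : k + 1 = N at h
  induction h with
  | base => rfl
  | step m g C hm hr hC ih => exact absurd hm (by omega)

lemma reach_finite {k : ℕ} (hk : 2 ≤ k) : ∀ n, {g : SimpleGraph ℕ | Reach k n g}.Finite := by
  intro n
  induction n with
  | zero =>
      convert Set.finite_empty
      ext g
      simp only [Set.mem_setOf_eq, Set.mem_empty_iff_false, iff_false]
      exact fun h => absurd (reach_ge h) (by omega)
  | succ n ih =>
      by_cases hn : k + 1 ≤ n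
      · have hsub : {g : SimpleGraph ℕ | Reach k (n + 1) g} ⊆
            ⋃ g ∈ {g : SimpleGraph ℕ | Reach k n g},
              (fun C => extendGraph g n C) '' {C : Finset ℕ | g.IsNClique k C} := by
          intro g' hg'
          obtain ⟨g, C, hr, hC, rfl⟩ := reach_succ_inv hn hg'
          exact Set.mem_biUnion hr ⟨C, hC, rfl⟩
        exact Set.Finite.subset (Set.Finite.biUnion ih
          (fun g hg => Set.Finite.image _ (reach_inv hk hg).2.1)) hsub
      · by_cases he : n + 1 = k + 1
        · have hsub : {g : SimpleGraph ℕ | Reach k (n + 1) g} ⊆ {completeBelow (k + 1)} := by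
            intro g hg
            rw [he] at hg
            exact reach_base_eq hg
          exact Set.Finite.subset (Set.finite_singleton _) hsub
        · convert Set.finite_empty
          ext g
          simp only [Set.mem_setOf_eq, Set.mem_empty_iff_false, iff_false]
          exact fun h => absurd (reach_ge h) (by omega)

lemma extendGraph_inj {n : ℕ} {g : SimpleGraph ℕ} {C C' : Finset ℕ}
    (ha : ∀ u v, g.Adj u v → u < n ∧ v < n) (hCn : ∀ u ∈ C, u < n)
    (hCn' : ∀ u ∈ C', u < n) (h : extendGraph g n C = extendGraph g n C') :
    C = C' := by
  have h1 := nbhd_extend_self ha hCn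
  rw [h, nbhd_extend_self ha hCn'] at h1
  exact Finset.coe_injective h1.symm

section Measure

variable {k : ℕ} {Ω : Type} [MeasurableSpace Ω] {μ : Measure Ω}
  {G : ℕ → Ω → SimpleGraph ℕ}

lemma E_meas (P : IsRandomKTreeProcess k μ G) (n : ℕ) (g h : SimpleGraph ℕ) :
    MeasurableSet {ω | G n ω = g ∧ G (n + 1) ω = h} := by
  have he : {ω | G n ω = g ∧ G (n + 1) ω = h}
      = {ω | G n ω = g} ∩ {ω | G (n + 1) ω = h} := rfl
  rw [he]
  exact (P.meas n g).inter (P.meas (n + 1) h)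

lemma measure_biUnion_cliques (hk : 2 ≤ k) (P : IsRandomKTreeProcess k μ G)
    {n : ℕ} {g : SimpleGraph ℕ} (hr : Reach k n g) (S : Finset (Finset ℕ))
    (hS : ∀ C ∈ S, g.IsNClique k C) :
    μ (⋃ C ∈ S, {ω | G n ω = g ∧ G (n + 1) ω = extendGraph g n C})
      = S.card • (μ {ω | G n ω = g}
          / ({D : Finset ℕ | g.IsNClique k D}.ncard : ENNReal)) := by
  have hn := reach_ge hr
  have ha := (reach_inv hk hr).1
  have hdisj : (↑S : Set (Finset ℕ)).PairwiseDisjoint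
      (fun C => {ω | G n ω = g ∧ G (n + 1) ω = extendGraph g n C}) := by
    intro C hC C' hC' hne
    rw [Function.onFun, Set.disjoint_left]
    rintro ω ⟨h1, h2⟩ ⟨h3, h4⟩
    exact hne (extendGraph_inj ha
      (clique_mem_lt hk ha (hS C hC)) (clique_mem_lt hk ha (hS C' hC'))
      (h2 ▸ h4))
  rw [measure_biUnion_finset hdisj (fun C _ => E_meas P n g _)]
  rw [Finset.sum_congr rfl (fun C hC => P.step n hn g C (hS C hC)),
    Finset.sum_const]

lemma measure_biUnion_all_cliques (hk : 2 ≤ k) (P : IsRandomKTreeProcess k μ G)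
    {n : ℕ} {g : SimpleGraph ℕ} (hr : Reach k n g) (T : Finset (Finset ℕ))
    (hT : ∀ C, C ∈ T ↔ g.IsNClique k C) :
    μ (⋃ C ∈ T, {ω | G n ω = g ∧ G (n + 1) ω = extendGraph g n C})
      = μ {ω | G n ω = g} := by
  have I := reach_inv hk hr
  rw [measure_biUnion_cliques hk P hr _ (fun C hC => (hT C).1 hC)]
  have hcard : T.card = {D : Finset ℕ | g.IsNClique k D}.ncard := by
    have hs : {D : Finset ℕ | g.IsNClique k D} = ↑T := by
      ext D
      simp [hT D]
    rw [hs, Set.ncard_coe_finset]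
  have hpos : ({D : Finset ℕ | g.IsNClique k D}.ncard : ENNReal) ≠ 0 := by
    have h2 := I.2.2.1
    simp only [ne_eq, Nat.cast_eq_zero]
    omega
  rw [nsmul_eq_mul, hcard, ENNReal.mul_div_cancel hpos (by
    simp only [ne_eq, ENNReal.natCast_ne_top, not_false_eq_true])]

open Classical in
noncomputable def cliqFin (k : ℕ) (g : SimpleGraph ℕ) : Finset (Finset ℕ) :=
  if h : {C : Finset ℕ | g.IsNClique k C}.Finite then h.toFinset else ∅

lemma mem_cliqFin {k : ℕ} {g : SimpleGraph ℕ}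
    (hfin : {C : Finset ℕ | g.IsNClique k C}.Finite) :
    ∀ C, C ∈ cliqFin k g ↔ g.IsNClique k C := by
  intro C
  unfold cliqFin
  rw [dif_pos hfin]
  exact Set.Finite.mem_toFinset hfin

lemma as_reach (hk : 2 ≤ k) (P : IsRandomKTreeProcess k μ G)
    [IsProbabilityMeasure μ] :
    ∀ n, k + 1 ≤ n → μ {ω | Reach k n (G n ω)} = 1 := by
  intro n hn
  induction n, hn using Nat.le_induction with
  | base =>
      refine le_antisymm prob_le_one ?_
      rw [← P.init]
      apply measure_mono
      intro ω hω
      simp only [Set.mem_setOf_eq] at hω ⊢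
      rw [hω]
      exact Reach.base
  | succ n hn ih =>
      refine le_antisymm prob_le_one ?_
      set Tn := (reach_finite hk n).toFinset with hTn
      have hTmem : ∀ g, g ∈ Tn ↔ Reach k n g := fun g =>
        Set.Finite.mem_toFinset _
      have hdisj : (↑Tn : Set (SimpleGraph ℕ)).PairwiseDisjoint
          (fun g => {ω | G n ω = g}) := by
        intro g hg g' hg' hne
        rw [Function.onFun, Set.disjoint_left]
        rintro ω h1 h2
        exact hne (h1.symm.trans h2)
      have hdisj2 : (↑Tn : Set (SimpleGraph ℕ)).PairwiseDisjoint
          (fun g => ⋃ C ∈ cliqFin k g,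
            {ω | G n ω = g ∧ G (n + 1) ω = extendGraph g n C}) := by
        intro g hg g' hg' hne
        refine Disjoint.mono ?_ ?_ (hdisj hg hg' hne) <;>
        · intro ω hω
          simp only [Set.mem_iUnion] at hω
          obtain ⟨C, _, h1, _⟩ := hω
          exact h1
      have key : ∀ g ∈ Tn, μ (⋃ C ∈ cliqFin k g,
          {ω | G n ω = g ∧ G (n + 1) ω = extendGraph g n C})
            = μ {ω | G n ω = g} := by
        intro g hg
        have hr : Reach k n g := (hTmem g).1 hg
        exact measure_biUnion_all_cliques hk P hr _
          (mem_cliqFin (reach_inv hk hr).2.1)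
      have hseteq : {ω | Reach k n (G n ω)} = ⋃ g ∈ Tn, {ω | G n ω = g} := by
        ext ω
        simp only [Set.mem_setOf_eq, Set.mem_iUnion]
        constructor
        · intro h
          exact ⟨G n ω, (hTmem _).2 h, rfl⟩
        · rintro ⟨g, hg, h⟩
          rw [h]
          exact (hTmem g).1 hg
      calc (1 : ENNReal) = μ {ω | Reach k n (G n ω)} := ih.symm
        _ = μ (⋃ g ∈ Tn, {ω | G n ω = g}) := by rw [hseteq]
        _ = ∑ g ∈ Tn, μ {ω | G n ω = g} :=
            measure_biUnion_finset hdisj (fun g _ => P.meas n g)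
        _ = ∑ g ∈ Tn, μ (⋃ C ∈ cliqFin k g,
              {ω | G n ω = g ∧ G (n + 1) ω = extendGraph g n C}) :=
            (Finset.sum_congr rfl key).symm
        _ = μ (⋃ g ∈ Tn, ⋃ C ∈ cliqFin k g,
              {ω | G n ω = g ∧ G (n + 1) ω = extendGraph g n C}) :=
            (measure_biUnion_finset hdisj2 (fun g _ =>
              Finset.measurableSet_biUnion _ (fun C _ => E_meas P n g _))).symm
        _ ≤ μ {ω | Reach k (n + 1) (G (n + 1) ω)} := by
            apply measure_mono
            intro ω hω
            simp only [Set.mem_iUnion] at hω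
            obtain ⟨g, hg, C, hC, h1, h2⟩ := hω
            simp only [Set.mem_setOf_eq]
            rw [h2]
            exact Reach.step n g C hn ((hTmem g).1 hg)
              ((mem_cliqFin (reach_inv hk ((hTmem g).1 hg)).2.1 C).1 hC)

lemma pos_reach (hk : 2 ≤ k) (P : IsRandomKTreeProcess k μ G)
    [IsProbabilityMeasure μ] {n : ℕ} (hn : k + 1 ≤ n) {g : SimpleGraph ℕ}
    (h0 : μ {ω | G n ω = g} ≠ 0) : Reach k n g := by
  by_contra hg
  have hseteq : {ω | Reach k n (G n ω)}
      = ⋃ g' ∈ (reach_finite hk n).toFinset, {ω | G n ω = g'} := by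
    ext ω
    simp only [Set.mem_setOf_eq, Set.mem_iUnion]
    constructor
    · intro h
      exact ⟨G n ω, (Set.Finite.mem_toFinset _).2 h, rfl⟩
    · rintro ⟨g', hg', h⟩
      rw [h]
      exact (Set.Finite.mem_toFinset _).1 hg'
  have hS : MeasurableSet {ω | Reach k n (G n ω)} := by
    rw [hseteq]
    exact Finset.measurableSet_biUnion _ (fun g' _ => P.meas n g')
  have hcompl : μ {ω | Reach k n (G n ω)}ᶜ = 0 := by
    rw [measure_compl hS (measure_ne_top μ _), as_reach hk P n hn, measure_univ]
    simp
  refine h0 (le_antisymm ?_ zero_le)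
  rw [← hcompl]
  apply measure_mono
  intro ω hω
  simp only [Set.mem_setOf_eq, Set.mem_compl_iff] at hω ⊢
  rw [hω]
  exact hg

lemma attach_measure (hk : 2 ≤ k) (P : IsRandomKTreeProcess k μ G)
    [IsProbabilityMeasure μ] {n : ℕ} {g : SimpleGraph ℕ} (hr : Reach k n g)
    {v : ℕ} (hv : v < n) :
    μ {ω | G n ω = g ∧ (G (n + 1) ω).Adj n v}
      = ({C : Finset ℕ | g.IsNClique k C ∧ v ∈ C}.ncard : ENNReal)
          * (μ {ω | G n ω = g}
              / ({D : Finset ℕ | g.IsNClique k D}.ncard : ENNReal)) := by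
  classical
  have I := reach_inv hk hr
  have ha := I.1
  have hfin := I.2.1
  set T := cliqFin k g with hTdef
  have hT : ∀ C, C ∈ T ↔ g.IsNClique k C := mem_cliqFin hfin
  set E : Finset ℕ → Set Ω :=
    fun C => {ω | G n ω = g ∧ G (n + 1) ω = extendGraph g n C} with hE
  set U : Set Ω := ⋃ C ∈ T, E C with hU
  set W : Set Ω := ⋃ C ∈ T.filter (fun C => v ∈ C), E C with hW
  have hUmeas : MeasurableSet U :=
    Finset.measurableSet_biUnion _ (fun C _ => E_meas P n g _)
  have hUsub : U ⊆ {ω | G n ω = g} := by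
    intro ω hω
    simp only [hU, Set.mem_iUnion] at hω
    obtain ⟨C, _, h1, _⟩ := hω
    exact h1
  have hUval : μ U = μ {ω | G n ω = g} :=
    measure_biUnion_all_cliques hk P hr T hT
  have hnull : μ ({ω | G n ω = g} \ U) = 0 := by
    rw [measure_diff hUsub hUmeas.nullMeasurableSet
      (by rw [hUval]; exact measure_ne_top μ _), hUval, tsub_self]
  have hWA : W ⊆ {ω | G n ω = g ∧ (G (n + 1) ω).Adj n v} := by
    intro ω hω
    simp only [hW, Set.mem_iUnion] at hω
    obtain ⟨C, hC, h1, h2⟩ := hω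
    rw [Finset.mem_filter] at hC
    have hclique := (hT C).1 hC.1
    refine ⟨h1, ?_⟩
    rw [h2, extendGraph_adj' ha (clique_mem_lt hk ha hclique)]
    exact Or.inr (Or.inl ⟨rfl, hC.2⟩)
  have hAW : {ω | G n ω = g ∧ (G (n + 1) ω).Adj n v}
      ⊆ W ∪ ({ω | G n ω = g} \ U) := by
    rintro ω ⟨h1, h2⟩
    by_cases hωU : ω ∈ U
    · left
      simp only [hU, Set.mem_iUnion] at hωU
      obtain ⟨C, hC, h3, h4⟩ := hωU
      have hclique := (hT C).1 hC
      have hCn := clique_mem_lt hk ha hclique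
      rw [h4, extendGraph_adj' ha hCn] at h2
      have hvC : v ∈ C := by
        rcases h2 with h | ⟨_, h⟩ | ⟨h, _⟩
        · exact absurd (ha n v h).1 (lt_irrefl n)
        · exact h
        · omega
      simp only [hW, Set.mem_iUnion]
      exact ⟨C, Finset.mem_filter.2 ⟨hC, hvC⟩, h3, h4⟩
    · right
      exact ⟨h1, hωU⟩
  have hmuW : μ {ω | G n ω = g ∧ (G (n + 1) ω).Adj n v} = μ W := by
    refine le_antisymm ?_ (measure_mono hWA)
    calc μ {ω | G n ω = g ∧ (G (n + 1) ω).Adj n v}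
        ≤ μ (W ∪ ({ω | G n ω = g} \ U)) := measure_mono hAW
      _ ≤ μ W + μ ({ω | G n ω = g} \ U) := measure_union_le _ _
      _ = μ W := by rw [hnull, add_zero]
  rw [hmuW, hW, measure_biUnion_cliques hk P hr _
    (fun C hC => (hT C).1 (Finset.mem_filter.1 hC).1)]
  have hcard : (T.filter (fun C => v ∈ C)).card
      = {C : Finset ℕ | g.IsNClique k C ∧ v ∈ C}.ncard := by
    have hs : {C : Finset ℕ | g.IsNClique k C ∧ v ∈ C}
        = ↑(T.filter (fun C => v ∈ C)) := by
      ext C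
      simp only [Set.mem_setOf_eq, Finset.coe_filter, Finset.mem_coe, hT C]
      try tauto
    rw [hs, Set.ncard_coe_finset]
  rw [nsmul_eq_mul, hcard]

end Measure

/-- For every integer `k ≥ 2`, every `k`-tree process realization, every `n ≥ k+1` and
every vertex `v` of `G n` with `deg_{G n}(v) = d`, the proportion of `k`-cliques of `G n`
containing `v` equals `((k−1)d − k(k−2)) / (kn − k² + 1)`.  Consequently, in the random
`k`-tree process, conditionally on `G^k(n)`, the probability that the new vertex `v_{n+1}`
is joined to a given vertex `v` of degree `d` is `((k−1)d − k(k−2)) / (kn − k² + 1)`. -/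
theorem kclique_proportion_and_attachment_probability (k : ℕ) (hk : 2 ≤ k) :
    (∀ G : ℕ → SimpleGraph ℕ, IsKTreeRealization k G →
      ∀ n, k + 1 ≤ n → ∀ v, v < n → ∀ d : ℕ, ((G n).neighborSet v).ncard = d →
        ({C : Finset ℕ | (G n).IsNClique k C ∧ v ∈ C}.ncard : ℝ)
            / ({C : Finset ℕ | (G n).IsNClique k C}.ncard : ℝ)
          = (((k : ℝ) - 1) * d - k * (k - 2)) / ((k : ℝ) * n - (k : ℝ) ^ 2 + 1)) ∧
    (∀ (Ω : Type) (_ : MeasurableSpace Ω) (μ : Measure Ω), IsProbabilityMeasure μ →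
      ∀ G : ℕ → Ω → SimpleGraph ℕ, IsRandomKTreeProcess k μ G →
      ∀ n, k + 1 ≤ n → ∀ g : SimpleGraph ℕ, ∀ v, v < n → ∀ d : ℕ,
        (g.neighborSet v).ncard = d →
        μ {ω | G n ω = g ∧ (G (n + 1) ω).Adj n v}
          = ENNReal.ofReal
              ((((k : ℝ) - 1) * d - k * (k - 2)) / ((k : ℝ) * n - (k : ℝ) ^ 2 + 1))
            * μ {ω | G n ω = g}) := by
  constructor
  · intro G hG n hn v hv d hd
    exact ratio_eq hk hn (reach_inv hk (realization_reach hk hG n hn)) hv hd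
  · intro Ω inst μ hprob G P n hn g v hv d hd
    haveI := hprob
    by_cases h0 : μ {ω | G n ω = g} = 0
    · rw [h0, mul_zero]
      refine le_antisymm ?_ zero_le
      rw [← h0]
      exact measure_mono (fun ω h => h.1)
    · have hr := pos_reach hk P hn h0
      have I := reach_inv hk hr
      obtain ⟨hnf, hdge, hcnt⟩ := I.2.2.2 v hv
      rw [hd] at hdge hcnt
      rw [attach_measure hk P hr hv, hcnt, I.2.2.1]
      have hNpos : (0 : ℝ) < ((k * n - k ^ 2 + 1 : ℕ) : ℝ) :=
        Nat.cast_pos.2 (by omega)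
      have hof : ENNReal.ofReal
            ((((k : ℝ) - 1) * d - k * (k - 2)) / ((k : ℝ) * n - (k : ℝ) ^ 2 + 1))
          = (((k - 1) * (d - k) + k : ℕ) : ENNReal)
              / ((k * n - k ^ 2 + 1 : ℕ) : ENNReal) := by
        rw [← cast_M hk hdge, ← cast_N hk hn, ENNReal.ofReal_div_of_pos hNpos,
          ENNReal.ofReal_natCast, ENNReal.ofReal_natCast]
      rw [hof, div_eq_mul_inv, div_eq_mul_inv]
      ring
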